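/- In the graph on a collection 𝒫 of finite sets (closed under unions/intersections as in the square lemma setting) where edges join sets with symmetric difference of size one, every embedded subgraph isomorphic to the 1-skeleton of an n-cube has a unique maximal element C⁺ and unique minimal element C⁻ under inclusion, and its vertex set is exactly the interval [C⁻, C⁺] = {R ∈ 𝒫 : C⁻ ⊆ R ⊆ C⁺}; moreover |C⁺| − |C⁻| = n. -/
import Mathlib

open scoped symmDiff
open Finset


/-- In the graph on a collection of finite sets (closed under unions below a
common superset and intersections above a common subset) whose edges join sets
with symmetric difference of size one, every embedded subgraph isomorphic to the
1-skeleton of an `n`-cube (the Hamming graph on `Fin n → Bool`) has a unique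
minimal element `C⁻` and a unique maximal element `C⁺` under inclusion, its
vertex set is exactly the interval `{R ∈ Pols : C⁻ ⊆ R ⊆ C⁺}`, and
`|C⁺| - |C⁻| = n`. -/
theorem cube_has_source_and_sink {A : Type*} [DecidableEq A] (Pols : Set (Finset A))
    (hUnion : ∀ P Q R : Finset A, P ∈ Pols → Q ∈ Pols → R ∈ Pols → P ⊆ R → Q ⊆ R → P ∪ Q ∈ Pols)
    (hInter : ∀ P Q R : Finset A, P ∈ Pols → Q ∈ Pols → R ∈ Pols → R ⊆ P → R ⊆ Q → P ∩ Q ∈ Pols)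
    (n : ℕ) (f : (Fin n → Bool) → Finset A)
    (hinj : Function.Injective f)
    (hmem : ∀ x, f x ∈ Pols)
    (hadj : ∀ x y, (Finset.univ.filter fun i => x i ≠ y i).card = 1 ↔
      (symmDiff (f x) (f y)).card = 1) :
    ∃ Cm Cp : Finset A, Cm ∈ Set.range f ∧ Cp ∈ Set.range f ∧
      (∀ x, Cm ⊆ f x ∧ f x ⊆ Cp) ∧
      Set.range f = {R | R ∈ Pols ∧ Cm ⊆ R ∧ R ⊆ Cp} ∧
      Cp.card = Cm.card + n := by
  classical
  set x₀ : Fin n → Bool := fun _ => false with hx₀def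
  set flp : Fin n → (Fin n → Bool) → (Fin n → Bool) :=
    fun i x => Function.update x i (!x i) with hflpdef
  have hflp_apply : ∀ i x j, flp i x j = if j = i then !(x i) else x j := by
    intro i x j; simp [hflpdef, Function.update_apply]
  have hflpflp : ∀ i x, flp i (flp i x) = x := by
    intro i x; funext j
    by_cases h : j = i <;> simp [hflp_apply, h]
  -- telescoping for symmetric differences
  have tele : ∀ P Q R : Finset A, (P ∆ Q) ∆ (Q ∆ R) = P ∆ R := by
    intro P Q R; rw [symmDiff_assoc, symmDiff_symmDiff_cancel_left]
  -- every flip is an edge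
  have hedge : ∀ x i, (f x ∆ f (flp i x)).card = 1 := by
    intro x i
    rw [← hadj]
    have hfil : (Finset.univ.filter fun j => x j ≠ flp i x j) = {i} := by
      ext j
      by_cases h : j = i <;> simp [hflp_apply, h]
    rw [hfil, Finset.card_singleton]
  -- the square (parallelogram) lemma
  have hsq : ∀ x i j, i ≠ j →
      f x ∆ f (flp i x) = f (flp j x) ∆ f (flp i (flp j x)) := by
    intro x i j hij
    set y := flp i x with hy
    set z := flp j x with hz
    set w := flp i z with hwdef
    have hwy : flp j y = w := by
      funext k
      rw [hy, hwdef, hz]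
      simp only [hflp_apply]
      by_cases hk : k = i <;> by_cases hk' : k = j <;>
        simp [hk, hk', hij, Ne.symm hij]
    obtain ⟨a1, h1⟩ := Finset.card_eq_one.mp (hedge x i)
    obtain ⟨a2, h2⟩ := Finset.card_eq_one.mp (hedge x j)
    obtain ⟨a3, h3⟩ := Finset.card_eq_one.mp (hedge y j)
    obtain ⟨a4, h4⟩ := Finset.card_eq_one.mp (hedge z i)
    rw [hwy] at h3
    have hxw : f x ∆ f w = {a1} ∆ {a3} := by rw [← h1, ← h3, tele]
    have hxw' : f x ∆ f w = {a2} ∆ {a4} := by rw [← h2, ← h4, tele]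
    have hyz : f y ∆ f z = {a1} ∆ {a2} := by
      rw [← h1, ← h2, symmDiff_comm (f x) (f y), tele]
    have hxwne : f x ≠ f w := by
      intro h
      have := congrFun (hinj h) i
      simp [hwdef, hz, hflp_apply, hij] at this
    have hyzne : f y ≠ f z := by
      intro h
      have := congrFun (hinj h) i
      simp [hy, hz, hflp_apply, hij] at this
    have h13 : a1 ≠ a3 := by
      rintro rfl
      exact hxwne (symmDiff_eq_bot.mp (by rw [hxw, symmDiff_self]))
    have h24 : a2 ≠ a4 := by
      rintro rfl
      exact hxwne (symmDiff_eq_bot.mp (by rw [hxw', symmDiff_self]))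
    have h12 : a1 ≠ a2 := by
      rintro rfl
      exact hyzne (symmDiff_eq_bot.mp (by rw [hyz, symmDiff_self]))
    have spair : ∀ u v : A, u ≠ v → ({u} ∆ {v} : Finset A) = {u, v} := by
      intro u v huv
      ext c
      by_cases hc : c = u <;> by_cases hc' : c = v <;>
        simp_all [Finset.mem_symmDiff]
    have hpairs : ({a1, a3} : Finset A) = {a2, a4} := by
      rw [← spair a1 a3 h13, ← spair a2 a4 h24, ← hxw, ← hxw']
    have ha14 : a1 = a4 := by
      have : a1 ∈ ({a2, a4} : Finset A) := by
        rw [← hpairs]; simp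
      simp at this
      rcases this with h | h
      · exact absurd h h12
      · exact h
    rw [h1, h4, ha14]
  -- weights
  set wt : (Fin n → Bool) → ℕ := fun x => (Finset.univ.filter fun j => x j = true).card
    with hwtdef
  have hwt0 : ∀ x, wt x = 0 → x = x₀ := by
    intro x h
    funext j
    have hempty := Finset.card_eq_zero.mp h
    by_contra hj
    have hxj : x j = true := by
      cases hxval : x j
      · exact absurd (by simp [hx₀def, hxval]) hj
      · rfl
    have : j ∈ (Finset.univ.filter fun j => x j = true) := by simp [hxj]
    rw [hempty] at this
    simp at this
  have hwtflip : ∀ x j, x j = true →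
      (Finset.univ.filter fun k => flp j x k = true)
        = (Finset.univ.filter fun k => x k = true).erase j := by
    intro x j hj
    ext k
    by_cases hk : k = j <;> simp [hflp_apply, hk, hj]
  have hwtflip' : ∀ x j, x j = true → wt (flp j x) + 1 = wt x := by
    intro x j hj
    have hjmem : j ∈ (Finset.univ.filter fun k => x k = true) := by simp [hj]
    have hpos := Finset.card_pos.mpr ⟨j, hjmem⟩
    rw [hwtdef]
    simp only
    rw [hwtflip x j hj, Finset.card_erase_of_mem hjmem]
    omega
  -- the toggled element is independent of the vertex
  have hD : ∀ k x, wt x = k → ∀ i, f x ∆ f (flp i x) = f x₀ ∆ f (flp i x₀) := by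
    intro k
    induction k with
    | zero => intro x hx i; rw [hwt0 x hx]
    | succ k ih =>
      intro x hx i
      have hex : ∃ j, x j = true := by
        by_contra h
        push_neg at h
        have : x = x₀ := by
          funext j
          have := h j
          simp [hx₀def]
          cases hxval : x j
          · rfl
          · exact absurd hxval (h j)
        rw [this] at hx
        simp [hwtdef, hx₀def] at hx
      obtain ⟨j, hj⟩ := hex
      set x' := flp j x with hx'def
      have hwx' : wt x' = k := by
        have h := hwtflip' x j hj; rw [← hx'def] at h; omega
      have hxx' : flp j x' = x := by rw [hx'def, hflpflp]
      by_cases hij : i = j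
      · subst hij
        rw [show flp i x = x' from rfl, symmDiff_comm, ← hxx']
        exact ih x' hwx' i
      · have hs := hsq x' i j hij
        rw [hxx'] at hs
        rw [← hs]
        exact ih x' hwx' i
  have hDall : ∀ x i, f x ∆ f (flp i x) = f x₀ ∆ f (flp i x₀) := fun x i => hD _ x rfl i
  choose a ha using fun i => Finset.card_eq_one.mp (hedge x₀ i)
  have hstep : ∀ x i, f (flp i x) = f x ∆ {a i} := by
    intro x i
    have h := hDall x i
    rw [ha i] at h
    rw [← h, symmDiff_symmDiff_cancel_left]
  have hainj : Function.Injective a := by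
    intro i j hij
    by_contra hne
    have h1 : f (flp i x₀) = f (flp j x₀) := by rw [hstep, hstep, hij]
    have h2 := congrFun (hinj h1) i
    simp [hflp_apply, hne] at h2
  -- explicit formula for f
  have hT : ∀ k x, wt x = k →
      f x = f x₀ ∆ ((Finset.univ.filter fun i => x i = true).image a) := by
    intro k
    induction k with
    | zero =>
      intro x hx
      rw [hwt0 x hx]
      have : (Finset.univ.filter fun i => x₀ i = true) = ∅ := by
        simp [hx₀def]
      rw [this, Finset.image_empty, ← Finset.bot_eq_empty, symmDiff_bot]
    | succ k ih =>
      intro x hx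
      have hex : ∃ j, x j = true := by
        by_contra h
        push_neg at h
        have : x = x₀ := by
          funext j
          cases hxval : x j
          · simp [hx₀def]
          · exact absurd hxval (h j)
        rw [this] at hx
        simp [hwtdef, hx₀def] at hx
      obtain ⟨j, hj⟩ := hex
      set x' := flp j x with hx'def
      have hwx' : wt x' = k := by
        have h := hwtflip' x j hj; rw [← hx'def] at h; omega
      have hxx' : flp j x' = x := by rw [hx'def, hflpflp]
      have e1 : f x = f x' ∆ {a j} := by rw [← hxx']; exact hstep x' j
      have e2 := ih x' hwx'
      have hfil : (Finset.univ.filter fun i => x i = true)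
          = insert j (Finset.univ.filter fun i => x' i = true) := by
        rw [hx'def, hwtflip x j hj, Finset.insert_erase (by simp [hj])]
      have hjnot : j ∉ (Finset.univ.filter fun i => x' i = true) := by
        rw [hx'def, hwtflip x j hj]
        exact Finset.notMem_erase j _
      have hanot : a j ∉ (Finset.univ.filter fun i => x' i = true).image a := by
        intro h
        obtain ⟨k', hk', hak⟩ := Finset.mem_image.mp h
        exact hjnot (hainj hak ▸ hk')
      have hins : ∀ (S : Finset A) (b : A), b ∉ S → insert b S = S ∆ {b} := by
        intro S b hb
        ext c
        by_cases hc : c = b <;> simp [Finset.mem_symmDiff, hc, hb]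
      rw [hfil, Finset.image_insert, hins _ _ hanot, e1, e2, symmDiff_assoc]
  have hTall : ∀ x, f x = f x₀ ∆ ((Finset.univ.filter fun i => x i = true).image a) :=
    fun x => hT _ x rfl
  set A₀ : Finset A := Finset.univ.image a with hA₀def
  have hTsub : ∀ x : Fin n → Bool, ((Finset.univ.filter fun i => x i = true).image a) ⊆ A₀ :=
    fun x => Finset.image_subset_image (Finset.filter_subset _ _)
  have hA₀card : A₀.card = n := by
    rw [hA₀def, Finset.card_image_of_injective _ hainj, Finset.card_univ]
    simp
  set Cm : Finset A := f x₀ \ A₀ with hCmdef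
  set Cp : Finset A := f x₀ ∪ A₀ with hCpdef
  have sandwich : ∀ S : Finset A, S ⊆ A₀ → Cm ⊆ f x₀ ∆ S ∧ f x₀ ∆ S ⊆ Cp := by
    intro S hS
    constructor
    · intro b hb
      rw [hCmdef, Finset.mem_sdiff] at hb
      rw [Finset.mem_symmDiff]
      exact Or.inl ⟨hb.1, fun h => hb.2 (hS h)⟩
    · intro b hb
      rw [Finset.mem_symmDiff] at hb
      rw [hCpdef, Finset.mem_union]
      rcases hb with ⟨h, _⟩ | ⟨h, _⟩
      · exact Or.inl h
      · exact Or.inr (hS h)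
  have realize : ∀ S : Finset A, S ⊆ A₀ → ∃ x, f x = f x₀ ∆ S := by
    intro S hS
    refine ⟨fun i => decide (a i ∈ S), ?_⟩
    rw [hTall]
    congr 1
    ext b
    simp only [Finset.mem_image, Finset.mem_filter, Finset.mem_univ, true_and,
      decide_eq_true_eq]
    constructor
    · rintro ⟨i, hi, rfl⟩; exact hi
    · intro hb
      obtain ⟨i, -, rfl⟩ := Finset.mem_image.mp (hS hb)
      exact ⟨i, hb, rfl⟩
  have hCmrange : Cm ∈ Set.range f := by
    obtain ⟨x, hx⟩ := realize (f x₀ ∩ A₀) Finset.inter_subset_right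
    refine ⟨x, ?_⟩
    rw [hx, hCmdef]
    ext b
    simp only [Finset.mem_symmDiff, Finset.mem_inter, Finset.mem_sdiff]
    tauto
  have hCprange : Cp ∈ Set.range f := by
    obtain ⟨x, hx⟩ := realize (A₀ \ f x₀) Finset.sdiff_subset
    refine ⟨x, ?_⟩
    rw [hx, hCpdef]
    ext b
    simp only [Finset.mem_symmDiff, Finset.mem_sdiff, Finset.mem_union]
    tauto
  refine ⟨Cm, Cp, hCmrange, hCprange, ?_, ?_, ?_⟩
  · intro x
    have := sandwich _ (hTsub x)
    rw [← hTall x] at this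
    exact this
  · ext R
    constructor
    · rintro ⟨x, rfl⟩
      have := sandwich _ (hTsub x)
      rw [← hTall x] at this
      exact ⟨hmem x, this.1, this.2⟩
    · rintro ⟨-, h1, h2⟩
      have hS : f x₀ ∆ R ⊆ A₀ := by
        intro b hb
        rw [Finset.mem_symmDiff] at hb
        rcases hb with ⟨hb1, hb2⟩ | ⟨hb1, hb2⟩
        · by_contra hbA
          exact hb2 (h1 (by rw [hCmdef, Finset.mem_sdiff]; exact ⟨hb1, hbA⟩))
        · have := h2 hb1
          rw [hCpdef, Finset.mem_union] at this
          tauto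
      obtain ⟨x, hx⟩ := realize _ hS
      exact ⟨x, by rw [hx, symmDiff_symmDiff_cancel_left]⟩
  · have hcup : Cp = Cm ∪ A₀ := by
      rw [hCpdef, hCmdef]
      ext b
      simp only [Finset.mem_union, Finset.mem_sdiff]
      tauto
    have hdisj : Disjoint Cm A₀ := by
      rw [hCmdef]; exact Finset.sdiff_disjoint
    rw [hcup, Finset.card_union_of_disjoint hdisj, hA₀card]
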